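/- arXiv:2403.01486 — 2 statements merged into one kernel-verified Lean document; each statement's English description precedes it below -/
import Mathlib

section
/- Let J be a finite index set, x₀ ∈ EuclideanSpace ℝ d, K ∈ ℕ, δ > 0, and G₀, G₁, G₂, B₀, B₁, B₂ ≥ 0. Let wⱼ, eⱼ : EuclideanSpace ℝ d → ℝ (j ∈ J) be C² on a neighborhood of x₀. Assume that for all but at most K indices j ∈ J, wⱼ vanishes identically on a neighborhood of x₀, and that for every j ∈ J: |wⱼ(x₀)| ≤ G₀, ‖gradient wⱼ x₀‖ ≤ G₁/δ, |Δwⱼ(x₀)| ≤ G₂/δ², and whenever wⱼ does not vanish on a neighborhood of x₀ also |eⱼ(x₀)| ≤ B₀, ‖gradient eⱼ x₀‖ ≤ B₁, |Δeⱼ(x₀)| ≤ B₂. Then |Δ(∑_{j∈J} wⱼ eⱼ)(x₀)| ≤ K (G₂ δ⁻² B₀ + 2 G₁ δ⁻¹ B₁ + G₀ B₂). (This is the consistency estimate (theorconv) for the Laplacian of the RBF-PUM approximation error, using the weight derivative bounds ‖D^β w‖_∞ ≤ G_{|β|} δ^{−|β|} of equation (west).) -/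
open Finset Filter
open scoped Classical Topology

/-- The Laplacian of `f` at `x`: sum of diagonal entries of the second Fréchet
derivative in the standard orthonormal basis of `EuclideanSpace ℝ (Fin d)`. -/
noncomputable def laplacian {d : ℕ} (f : EuclideanSpace ℝ (Fin d) → ℝ)
    (x : EuclideanSpace ℝ (Fin d)) : ℝ :=
  ∑ i : Fin d, fderiv ℝ (fderiv ℝ f) x (EuclideanSpace.single i 1) (EuclideanSpace.single i 1)

lemma laplacian_congr {d : ℕ} {f g : EuclideanSpace ℝ (Fin d) → ℝ}
    {x : EuclideanSpace ℝ (Fin d)} (h : f =ᶠ[𝓝 x] g) :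
    laplacian f x = laplacian g x := by
  have h2 : fderiv ℝ (fderiv ℝ f) x = fderiv ℝ (fderiv ℝ g) x := h.fderiv.fderiv_eq
  unfold laplacian
  rw [h2]

lemma laplacian_zero {d : ℕ} (x : EuclideanSpace ℝ (Fin d)) :
    laplacian (fun _ => (0:ℝ)) x = 0 := by
  simp [laplacian, Pi.zero_def, fderiv_const]

lemma fderiv_apply_eq_inner_gradient {d : ℕ} (f : EuclideanSpace ℝ (Fin d) → ℝ)
    (x v : EuclideanSpace ℝ (Fin d)) :
    fderiv ℝ f x v = inner ℝ (gradient f x) v := by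
  have : (InnerProductSpace.toDual ℝ (EuclideanSpace ℝ (Fin d))) (gradient f x) = fderiv ℝ f x :=
    LinearIsometryEquiv.apply_symm_apply _ _
  rw [← this, InnerProductSpace.toDual_apply_apply]

lemma laplacian_add {d : ℕ} {f g : EuclideanSpace ℝ (Fin d) → ℝ}
    {x : EuclideanSpace ℝ (Fin d)} (hf : ContDiffAt ℝ 2 f x) (hg : ContDiffAt ℝ 2 g x) :
    laplacian (fun y => f y + g y) x = laplacian f x + laplacian g x := by
  have h2 : (2 : WithTop ℕ∞) ≠ ((⊤:ℕ∞) : WithTop ℕ∞) := by norm_num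
  have hev : (fun y => fderiv ℝ (fun z => f z + g z) y)
      =ᶠ[𝓝 x] fun y => fderiv ℝ f y + fderiv ℝ g y := by
    filter_upwards [hf.eventually h2, hg.eventually h2] with y hfy hgy
    exact fderiv_fun_add (hfy.differentiableAt (by norm_num)) (hgy.differentiableAt (by norm_num))
  have hDf : DifferentiableAt ℝ (fderiv ℝ f) x :=
    (hf.fderiv_right (by norm_num : (1 : WithTop ℕ∞) + 1 ≤ 2)).differentiableAt (by norm_num)
  have hDg : DifferentiableAt ℝ (fderiv ℝ g) x :=
    (hg.fderiv_right (by norm_num : (1 : WithTop ℕ∞) + 1 ≤ 2)).differentiableAt (by norm_num)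
  have key : fderiv ℝ (fderiv ℝ (fun z => f z + g z)) x
      = fderiv ℝ (fderiv ℝ f) x + fderiv ℝ (fderiv ℝ g) x := by
    rw [hev.fderiv_eq, fderiv_fun_add hDf hDg]
  unfold laplacian
  rw [key]
  simp [Finset.sum_add_distrib]

lemma laplacian_sum {d : ℕ} {ι : Type*} (J : Finset ι)
    (f : ι → EuclideanSpace ℝ (Fin d) → ℝ) {x : EuclideanSpace ℝ (Fin d)}
    (hf : ∀ j ∈ J, ContDiffAt ℝ 2 (f j) x) :
    laplacian (fun y => ∑ j ∈ J, f j y) x = ∑ j ∈ J, laplacian (f j) x := by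
  classical
  induction J using Finset.induction_on with
  | empty => simpa using laplacian_zero x
  | insert a s hnm ih =>
    have hca : ContDiffAt ℝ 2 (f a) x := hf a (Finset.mem_insert_self a s)
    have hcs : ∀ j ∈ s, ContDiffAt ℝ 2 (f j) x :=
      fun j hj => hf j (Finset.mem_insert_of_mem hj)
    have hsum : ContDiffAt ℝ 2 (fun y => ∑ j ∈ s, f j y) x := ContDiffAt.sum hcs
    have : (fun y => ∑ j ∈ insert a s, f j y) = fun y => f a y + ∑ j ∈ s, f j y := by
      funext y; exact Finset.sum_insert hnm
    rw [this, laplacian_add hca hsum, ih hcs, Finset.sum_insert hnm]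

lemma laplacian_mul {d : ℕ} {f g : EuclideanSpace ℝ (Fin d) → ℝ}
    {x : EuclideanSpace ℝ (Fin d)} (hf : ContDiffAt ℝ 2 f x) (hg : ContDiffAt ℝ 2 g x) :
    laplacian (fun y => f y * g y) x =
      laplacian f x * g x + 2 * inner ℝ (gradient f x) (gradient g x) + f x * laplacian g x := by
  have h2 : (2 : WithTop ℕ∞) ≠ ((⊤:ℕ∞) : WithTop ℕ∞) := by norm_num
  have hdf : DifferentiableAt ℝ f x := hf.differentiableAt (by norm_num)
  have hdg : DifferentiableAt ℝ g x := hg.differentiableAt (by norm_num)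
  have hDf : DifferentiableAt ℝ (fderiv ℝ f) x :=
    (hf.fderiv_right (by norm_num : (1 : WithTop ℕ∞) + 1 ≤ 2)).differentiableAt (by norm_num)
  have hDg : DifferentiableAt ℝ (fderiv ℝ g) x :=
    (hg.fderiv_right (by norm_num : (1 : WithTop ℕ∞) + 1 ≤ 2)).differentiableAt (by norm_num)
  have hev : (fun y => fderiv ℝ (fun z => f z * g z) y)
      =ᶠ[𝓝 x] fun y => f y • fderiv ℝ g y + g y • fderiv ℝ f y := by
    filter_upwards [hf.eventually h2, hg.eventually h2] with y hfy hgy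
    exact fderiv_fun_mul (hfy.differentiableAt (by norm_num)) (hgy.differentiableAt (by norm_num))
  have key : fderiv ℝ (fderiv ℝ (fun z => f z * g z)) x =
      (f x • fderiv ℝ (fderiv ℝ g) x + (fderiv ℝ f x).smulRight (fderiv ℝ g x)) +
      (g x • fderiv ℝ (fderiv ℝ f) x + (fderiv ℝ g x).smulRight (fderiv ℝ f x)) := by
    rw [hev.fderiv_eq, fderiv_fun_add (f := fun y => f y • fderiv ℝ g y) (g := fun y => g y • fderiv ℝ f y)
        (hdf.smul hDg) (hdg.smul hDf),
      fderiv_fun_smul hdf hDg, fderiv_fun_smul hdg hDf]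
  have hinner : ∀ (u v : EuclideanSpace ℝ (Fin d) → ℝ),
      ∑ i : Fin d, fderiv ℝ u x (EuclideanSpace.single i 1) *
        fderiv ℝ v x (EuclideanSpace.single i 1)
      = (inner ℝ (gradient u x) (gradient v x) : ℝ) := by
    intro u v
    rw [← OrthonormalBasis.sum_inner_mul_inner (EuclideanSpace.basisFun (Fin d) ℝ)
      (gradient u x) (gradient v x)]
    refine Finset.sum_congr rfl fun i _ => ?_
    rw [fderiv_apply_eq_inner_gradient, fderiv_apply_eq_inner_gradient,
      real_inner_comm (gradient v x)]
    simp [EuclideanSpace.basisFun_apply]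
  unfold laplacian
  have happ : ∀ i : Fin d,
      fderiv ℝ (fderiv ℝ (fun z => f z * g z)) x (EuclideanSpace.single i 1)
        (EuclideanSpace.single i 1)
      = f x * fderiv ℝ (fderiv ℝ g) x (EuclideanSpace.single i 1) (EuclideanSpace.single i 1)
        + fderiv ℝ f x (EuclideanSpace.single i 1) * fderiv ℝ g x (EuclideanSpace.single i 1)
        + g x * fderiv ℝ (fderiv ℝ f) x (EuclideanSpace.single i 1) (EuclideanSpace.single i 1)
        + fderiv ℝ g x (EuclideanSpace.single i 1) * fderiv ℝ f x (EuclideanSpace.single i 1) := by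
    intro i
    rw [key]
    simp only [ContinuousLinearMap.add_apply, ContinuousLinearMap.smul_apply,
      ContinuousLinearMap.smulRight_apply, smul_eq_mul]
    ring
  calc ∑ i : Fin d, fderiv ℝ (fderiv ℝ (fun z => f z * g z)) x (EuclideanSpace.single i 1)
        (EuclideanSpace.single i 1)
      = ∑ i : Fin d,
        (f x * fderiv ℝ (fderiv ℝ g) x (EuclideanSpace.single i 1) (EuclideanSpace.single i 1)
        + fderiv ℝ f x (EuclideanSpace.single i 1) * fderiv ℝ g x (EuclideanSpace.single i 1)
        + g x * fderiv ℝ (fderiv ℝ f) x (EuclideanSpace.single i 1) (EuclideanSpace.single i 1)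
        + fderiv ℝ g x (EuclideanSpace.single i 1) * fderiv ℝ f x (EuclideanSpace.single i 1)) :=
        Finset.sum_congr rfl fun i _ => happ i
    _ = f x * laplacian g x + inner ℝ (gradient f x) (gradient g x)
        + g x * laplacian f x + inner ℝ (gradient g x) (gradient f x) := by
        simp only [Finset.sum_add_distrib, ← Finset.mul_sum, hinner]
        rfl
    _ = laplacian f x * g x + 2 * inner ℝ (gradient f x) (gradient g x) + f x * laplacian g x := by
        rw [real_inner_comm (gradient g x)]
        ring

/-- Consistency estimate for the Laplacian of the RBF-PUM error
`∑ⱼ wⱼ eⱼ`: with at most `K` weights not vanishing near `x₀`, weight-derivative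
bounds `G₀, G₁/δ, G₂/δ²` and local error bounds `B₀, B₁, B₂`, one has
`|Δ(∑ⱼ wⱼ eⱼ)(x₀)| ≤ K (G₂ δ⁻² B₀ + 2 G₁ δ⁻¹ B₁ + G₀ B₂)`. -/
theorem laplacian_pum_error_bound {ι : Type*} {d : ℕ}
    (J : Finset ι) (x₀ : EuclideanSpace ℝ (Fin d)) (K : ℕ) (δ : ℝ) (hδ : 0 < δ)
    (G₀ G₁ G₂ B₀ B₁ B₂ : ℝ)
    (hG₀ : 0 ≤ G₀) (hG₁ : 0 ≤ G₁) (hG₂ : 0 ≤ G₂)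
    (hB₀ : 0 ≤ B₀) (hB₁ : 0 ≤ B₁) (hB₂ : 0 ≤ B₂)
    (w e : ι → EuclideanSpace ℝ (Fin d) → ℝ)
    (hwC : ∀ j ∈ J, ContDiffAt ℝ 2 (w j) x₀)
    (heC : ∀ j ∈ J, ContDiffAt ℝ 2 (e j) x₀)
    (hK : (J.filter fun j => ¬ (∀ᶠ y in 𝓝 x₀, w j y = 0)).card ≤ K)
    (hw0 : ∀ j ∈ J, |w j x₀| ≤ G₀)
    (hw1 : ∀ j ∈ J, ‖gradient (w j) x₀‖ ≤ G₁ / δ)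
    (hw2 : ∀ j ∈ J, |laplacian (w j) x₀| ≤ G₂ / δ ^ 2)
    (he0 : ∀ j ∈ J, ¬ (∀ᶠ y in 𝓝 x₀, w j y = 0) → |e j x₀| ≤ B₀)
    (he1 : ∀ j ∈ J, ¬ (∀ᶠ y in 𝓝 x₀, w j y = 0) → ‖gradient (e j) x₀‖ ≤ B₁)
    (he2 : ∀ j ∈ J, ¬ (∀ᶠ y in 𝓝 x₀, w j y = 0) → |laplacian (e j) x₀| ≤ B₂) :
    |laplacian (fun y => ∑ j ∈ J, w j y * e j y) x₀| ≤
      (K : ℝ) * (G₂ * (δ ^ 2)⁻¹ * B₀ + 2 * G₁ * δ⁻¹ * B₁ + G₀ * B₂) := by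
  classical
  set C : ℝ := G₂ * (δ ^ 2)⁻¹ * B₀ + 2 * G₁ * δ⁻¹ * B₁ + G₀ * B₂ with hC
  set S : Finset ι := J.filter fun j => ¬ (∀ᶠ y in 𝓝 x₀, w j y = 0) with hS
  have hsplit : laplacian (fun y => ∑ j ∈ J, w j y * e j y) x₀
      = ∑ j ∈ J, laplacian (fun y => w j y * e j y) x₀ :=
    laplacian_sum J _ fun j hj => (hwC j hj).mul (heC j hj)
  have hvanish : ∀ j ∈ J, j ∉ S → laplacian (fun y => w j y * e j y) x₀ = 0 := by
    intro j hj hjS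
    have hv : ∀ᶠ y in 𝓝 x₀, w j y = 0 := by
      by_contra h
      exact hjS (Finset.mem_filter.2 ⟨hj, h⟩)
    have : (fun y => w j y * e j y) =ᶠ[𝓝 x₀] fun _ => (0:ℝ) := by
      filter_upwards [hv] with y hy; simp [hy]
    rw [laplacian_congr this, laplacian_zero]
  have hrestrict : ∑ j ∈ J, laplacian (fun y => w j y * e j y) x₀
      = ∑ j ∈ S, laplacian (fun y => w j y * e j y) x₀ := by
    refine (Finset.sum_subset (Finset.filter_subset _ _) ?_).symm
    intro j hj hjS
    exact hvanish j hj hjS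
  have hbound : ∀ j ∈ S, |laplacian (fun y => w j y * e j y) x₀| ≤ C := by
    intro j hjS
    obtain ⟨hj, hnv⟩ := Finset.mem_filter.1 hjS
    rw [laplacian_mul (hwC j hj) (heC j hj)]
    have h1 : |laplacian (w j) x₀ * e j x₀| ≤ G₂ * (δ ^ 2)⁻¹ * B₀ := by
      rw [abs_mul]
      have := hw2 j hj
      rw [div_eq_mul_inv] at this
      exact mul_le_mul this (he0 j hj hnv) (abs_nonneg _)
        (by positivity)
    have h2 : |(2:ℝ) * inner ℝ (gradient (w j) x₀) (gradient (e j) x₀)| ≤ 2 * G₁ * δ⁻¹ * B₁ := by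
      rw [abs_mul, abs_two]
      have hi : |(inner ℝ (gradient (w j) x₀) (gradient (e j) x₀) : ℝ)|
          ≤ ‖gradient (w j) x₀‖ * ‖gradient (e j) x₀‖ := abs_real_inner_le_norm _ _
      have hle : ‖gradient (w j) x₀‖ * ‖gradient (e j) x₀‖ ≤ (G₁ / δ) * B₁ :=
        mul_le_mul (hw1 j hj) (he1 j hj hnv) (norm_nonneg _)
          ((norm_nonneg _).trans (hw1 j hj))
      calc 2 * |(inner ℝ (gradient (w j) x₀) (gradient (e j) x₀) : ℝ)|
          ≤ 2 * ((G₁ / δ) * B₁) := by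
            exact mul_le_mul_of_nonneg_left (hi.trans hle) (by norm_num)
        _ = 2 * G₁ * δ⁻¹ * B₁ := by rw [div_eq_mul_inv]; ring
    have h3 : |w j x₀ * laplacian (e j) x₀| ≤ G₀ * B₂ := by
      rw [abs_mul]
      exact mul_le_mul (hw0 j hj) (he2 j hj hnv) (abs_nonneg _) hG₀
    calc |laplacian (w j) x₀ * e j x₀
          + 2 * inner ℝ (gradient (w j) x₀) (gradient (e j) x₀)
          + w j x₀ * laplacian (e j) x₀|
        ≤ |laplacian (w j) x₀ * e j x₀
          + 2 * inner ℝ (gradient (w j) x₀) (gradient (e j) x₀)|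
          + |w j x₀ * laplacian (e j) x₀| := abs_add_le _ _
      _ ≤ (|laplacian (w j) x₀ * e j x₀|
          + |2 * inner ℝ (gradient (w j) x₀) (gradient (e j) x₀)|)
          + |w j x₀ * laplacian (e j) x₀| := by
          exact add_le_add (abs_add_le _ _) le_rfl
      _ ≤ C := by rw [hC]; exact add_le_add (add_le_add h1 h2) h3
  have hCnonneg : 0 ≤ C := by
    rw [hC]; positivity
  calc |laplacian (fun y => ∑ j ∈ J, w j y * e j y) x₀|
      = |∑ j ∈ S, laplacian (fun y => w j y * e j y) x₀| := by rw [hsplit, hrestrict]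
    _ ≤ ∑ j ∈ S, |laplacian (fun y => w j y * e j y) x₀| := Finset.abs_sum_le_sum_abs _ _
    _ ≤ ∑ _j ∈ S, C := Finset.sum_le_sum hbound
    _ = (S.card : ℝ) * C := by rw [Finset.sum_const, nsmul_eq_mul]
    _ ≤ (K : ℝ) * C := by
        exact mul_le_mul_of_nonneg_right (by exact_mod_cast hK) hCnonneg
end

section
/- Let d ≥ 1, let Q : EuclideanSpace ℝ d ≃ₗᵢ[ℝ] EuclideanSpace ℝ d be a linear isometry equivalence, let s : Fin d → ℝ, let S : EuclideanSpace ℝ d →L[ℝ] EuclideanSpace ℝ d be the diagonal scaling (S x)ᵢ = sᵢ xᵢ, let b ∈ EuclideanSpace ℝ d, and define T(x) = S (Q x) + b. If v : EuclideanSpace ℝ d → ℝ is C² on a neighborhood of T(x), then |Δ(v ∘ T)(x)| ≤ d · (max_i sᵢ²) · max_i |D²v(T x)[eᵢ, eᵢ]|. (This is the local Laplacian error bound (edelta) in the paper.) -/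
open Finset

lemma euclid_entry_eq {d : ℕ} (Q : EuclideanSpace ℝ (Fin d) ≃ₗᵢ[ℝ] EuclideanSpace ℝ (Fin d))
    (i l : Fin d) :
    (Q (EuclideanSpace.single i 1)) l = (Q.symm (EuclideanSpace.single l 1)) i := by
  have h1 : (inner ℝ (EuclideanSpace.single l (1:ℝ)) (Q (EuclideanSpace.single i 1)) : ℝ)
      = (Q (EuclideanSpace.single i 1)) l := by
    rw [EuclideanSpace.inner_single_left]; simp
  have h2 : (inner ℝ (Q.symm (EuclideanSpace.single l (1:ℝ))) (EuclideanSpace.single i (1:ℝ)) : ℝ)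
      = (Q.symm (EuclideanSpace.single l 1)) i := by
    rw [EuclideanSpace.inner_single_right]; simp
  rw [← h1, ← h2, Q.symm.inner_map_eq_flip, LinearIsometryEquiv.symm_symm]

lemma col_orth {d : ℕ} (Q : EuclideanSpace ℝ (Fin d) ≃ₗᵢ[ℝ] EuclideanSpace ℝ (Fin d))
    (j k : Fin d) :
    ∑ i : Fin d, (Q (EuclideanSpace.single i 1)) j * (Q (EuclideanSpace.single i 1)) k
      = if j = k then 1 else 0 := by
  have : ∑ i : Fin d, (Q (EuclideanSpace.single i 1)) j * (Q (EuclideanSpace.single i 1)) k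
      = (inner ℝ (Q.symm (EuclideanSpace.single j 1)) (Q.symm (EuclideanSpace.single k 1)) : ℝ) := by
    rw [PiLp.inner_apply]
    refine Finset.sum_congr rfl fun i _ => ?_
    rw [euclid_entry_eq Q i j, euclid_entry_eq Q i k]
    simp [RCLike.inner_apply, mul_comm]
  rw [this, Q.symm.inner_map_map, EuclideanSpace.inner_single_left]
  simp [EuclideanSpace.single_apply, eq_comm]

/-- Local Laplacian error bound: for `T x = S (Q x) + b` with `Q` a rotation and
`S` the diagonal scaling with entries `s i`,
`|Δ(v ∘ T)(x)| ≤ d (max_i s i²) max_i |D²v(T x)[eᵢ, eᵢ]|`. -/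
theorem abs_laplacian_comp_scaled_isometry_le (d : ℕ) (hd : 1 ≤ d)
    (Q : EuclideanSpace ℝ (Fin d) ≃ₗᵢ[ℝ] EuclideanSpace ℝ (Fin d))
    (s : Fin d → ℝ)
    (S : EuclideanSpace ℝ (Fin d) →L[ℝ] EuclideanSpace ℝ (Fin d))
    (hS : ∀ x : EuclideanSpace ℝ (Fin d), ∀ i : Fin d, S x i = s i * x i)
    (b : EuclideanSpace ℝ (Fin d))
    (T : EuclideanSpace ℝ (Fin d) → EuclideanSpace ℝ (Fin d))
    (hT : ∀ x, T x = S (Q x) + b)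
    (v : EuclideanSpace ℝ (Fin d) → ℝ)
    (x : EuclideanSpace ℝ (Fin d))
    (hv : ContDiffAt ℝ 2 v (T x)) :
    |laplacian (v ∘ T) x| ≤
      (d : ℝ) * (⨆ i : Fin d, s i ^ 2) *
        ⨆ i : Fin d,
          |fderiv ℝ (fderiv ℝ v) (T x) (EuclideanSpace.single i 1)
            (EuclideanSpace.single i 1)| := by
  haveI : Nonempty (Fin d) := ⟨⟨0, hd⟩⟩
  -- the linear part of T
  set A : EuclideanSpace ℝ (Fin d) →L[ℝ] EuclideanSpace ℝ (Fin d) := S.comp (Q.toContinuousLinearEquiv : EuclideanSpace ℝ (Fin d) →L[ℝ] EuclideanSpace ℝ (Fin d)) with hAdef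
  have hAx : ∀ y : EuclideanSpace ℝ (Fin d), A y = S (Q y) := fun y => rfl
  have hTA : ∀ y : EuclideanSpace ℝ (Fin d), T y = A y + b := fun y => by rw [hT, hAx]
  have hTfun : T = fun y => A y + b := funext hTA
  have hTder : ∀ y : EuclideanSpace ℝ (Fin d), HasFDerivAt T A y := by
    intro y
    rw [hTfun]
    exact (A.hasFDerivAt).add_const b
  -- v is C² near T x, so differentiable near T x
  have hv2 : ∀ᶠ z in nhds (T x), ContDiffAt ℝ 2 v z := hv.eventually (by norm_num)
  have hvd : ∀ᶠ z in nhds (T x), DifferentiableAt ℝ v z :=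
    hv2.mono fun z hz => hz.differentiableAt (by norm_num)
  have hTc : ContinuousAt T x := (hTder x).continuousAt
  have hvdT : ∀ᶠ y in nhds x, DifferentiableAt ℝ v (T y) := hTc.eventually hvd
  -- first derivative of v ∘ T near x
  set L : (EuclideanSpace ℝ (Fin d) →L[ℝ] ℝ) →L[ℝ] (EuclideanSpace ℝ (Fin d) →L[ℝ] ℝ) :=
    (ContinuousLinearMap.compL ℝ (EuclideanSpace ℝ (Fin d)) (EuclideanSpace ℝ (Fin d)) ℝ).flip A with hLdef
  have hL : ∀ g : EuclideanSpace ℝ (Fin d) →L[ℝ] ℝ, L g = g.comp A := fun g => rfl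
  have hfd : (fun y => fderiv ℝ (v ∘ T) y) =ᶠ[nhds x]
      (fun y => L (fderiv ℝ v (T y))) := by
    filter_upwards [hvdT] with y hy
    have := (hy.hasFDerivAt.comp y (hTder y)).fderiv
    rw [this, hL]
  -- second derivative
  have hG : DifferentiableAt ℝ (fderiv ℝ v) (T x) :=
    (hv.fderiv_right (m := 1) (by norm_num)).differentiableAt (by norm_num)
  set H : EuclideanSpace ℝ (Fin d) →L[ℝ] EuclideanSpace ℝ (Fin d) →L[ℝ] ℝ := fderiv ℝ (fderiv ℝ v) (T x) with hHdef
  have hcomp : HasFDerivAt (fun y => L (fderiv ℝ v (T y)))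
      ((L.comp H).comp A) x := by
    exact (L.hasFDerivAt.comp (T x) hG.hasFDerivAt).comp x (hTder x) |>.congr_fderiv rfl
  have hsnd : fderiv ℝ (fderiv ℝ (v ∘ T)) x = (L.comp H).comp A := by
    rw [Filter.EventuallyEq.fderiv_eq hfd]
    exact hcomp.fderiv
  -- diagonal entries
  have hdiag : ∀ u w : EuclideanSpace ℝ (Fin d), fderiv ℝ (fderiv ℝ (v ∘ T)) x u w = H (A u) (A w) := by
    intro u w
    rw [hsnd]
    rfl
  -- expand a vector in the standard basis
  have hexp : ∀ u : EuclideanSpace ℝ (Fin d), u = ∑ j : Fin d, u j • EuclideanSpace.single j 1 := by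
    intro u
    have h := (EuclideanSpace.basisFun (Fin d) ℝ).sum_repr u
    simp only [EuclideanSpace.basisFun_apply, EuclideanSpace.basisFun_repr] at h
    exact h.symm
  -- bilinear expansion
  have hbil : ∀ u w : EuclideanSpace ℝ (Fin d), H u w = ∑ j : Fin d, ∑ k : Fin d,
      u j * w k * H (EuclideanSpace.single j 1) (EuclideanSpace.single k 1) := by
    intro u w
    have h2 : ∀ j : Fin d, H (EuclideanSpace.single j 1) w
        = ∑ k : Fin d, w k * H (EuclideanSpace.single j 1) (EuclideanSpace.single k 1) := by
      intro j
      conv_lhs => rw [hexp w]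
      rw [map_sum]
      exact Finset.sum_congr rfl fun k _ => by rw [map_smul]; rfl
    have h1 : H u w = ∑ j : Fin d, u j * H (EuclideanSpace.single j 1) w := by
      conv_lhs => rw [hexp u]
      rw [map_sum, ContinuousLinearMap.sum_apply]
      exact Finset.sum_congr rfl fun j _ => by rw [map_smul]; rfl
    rw [h1]
    refine Finset.sum_congr rfl fun j _ => ?_
    rw [h2, Finset.mul_sum]
    exact Finset.sum_congr rfl fun k _ => by ring
  -- entries of A on basis vectors
  have hAe : ∀ (i j : Fin d), (A (EuclideanSpace.single i 1)) j
      = s j * (Q (EuclideanSpace.single i 1)) j := by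
    intro i j
    rw [hAx, hS]
  -- key algebraic identity
  have hkey : laplacian (v ∘ T) x = ∑ j : Fin d, s j ^ 2 *
      H (EuclideanSpace.single j 1) (EuclideanSpace.single j 1) := by
    unfold laplacian
    have : ∀ i : Fin d, fderiv ℝ (fderiv ℝ (v ∘ T)) x (EuclideanSpace.single i 1)
        (EuclideanSpace.single i 1)
        = ∑ j : Fin d, ∑ k : Fin d,
          (s j * (Q (EuclideanSpace.single i 1)) j) * (s k * (Q (EuclideanSpace.single i 1)) k)
            * H (EuclideanSpace.single j 1) (EuclideanSpace.single k 1) := by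
      intro i
      rw [hdiag, hbil]
      refine Finset.sum_congr rfl fun j _ => Finset.sum_congr rfl fun k _ => ?_
      rw [hAe, hAe]
    rw [Finset.sum_congr rfl fun i _ => this i]
    rw [Finset.sum_comm]
    refine Finset.sum_congr rfl fun j _ => ?_
    rw [Finset.sum_comm]
    have : ∀ k : Fin d, ∑ i : Fin d,
        (s j * (Q (EuclideanSpace.single i 1)) j) * (s k * (Q (EuclideanSpace.single i 1)) k)
          * H (EuclideanSpace.single j 1) (EuclideanSpace.single k 1)
        = (s j * s k * (if j = k then 1 else 0))
          * H (EuclideanSpace.single j 1) (EuclideanSpace.single k 1) := by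
      intro k
      rw [← Finset.sum_mul]
      congr 1
      rw [← col_orth Q j k, Finset.mul_sum]
      refine Finset.sum_congr rfl fun i _ => by ring
    rw [Finset.sum_congr rfl fun k _ => this k]
    simp only [mul_ite, ite_mul, mul_one, mul_zero, zero_mul, Finset.sum_ite_eq,
      Finset.mem_univ, if_true]
    ring
  -- the bound
  rw [hkey]
  have hbdd1 : BddAbove (Set.range fun i : Fin d => s i ^ 2) :=
    Set.Finite.bddAbove (Set.finite_range _)
  have hbdd2 : BddAbove (Set.range fun i : Fin d =>
      |H (EuclideanSpace.single i 1) (EuclideanSpace.single i 1)|) :=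
    Set.Finite.bddAbove (Set.finite_range _)
  calc |∑ j : Fin d, s j ^ 2 * H (EuclideanSpace.single j 1) (EuclideanSpace.single j 1)|
      ≤ ∑ j : Fin d, |s j ^ 2 * H (EuclideanSpace.single j 1) (EuclideanSpace.single j 1)| :=
        Finset.abs_sum_le_sum_abs _ _
    _ ≤ ∑ _j : Fin d, (⨆ i : Fin d, s i ^ 2) *
        ⨆ i : Fin d, |H (EuclideanSpace.single i 1) (EuclideanSpace.single i 1)| := by
        refine Finset.sum_le_sum fun j _ => ?_
        rw [abs_mul, abs_pow]
        have h1 : |s j| ^ 2 ≤ ⨆ i : Fin d, s i ^ 2 := by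
          rw [sq_abs]; exact le_ciSup hbdd1 j
        have h2 : |H (EuclideanSpace.single j 1) (EuclideanSpace.single j 1)|
            ≤ ⨆ i : Fin d, |H (EuclideanSpace.single i 1) (EuclideanSpace.single i 1)| :=
          le_ciSup hbdd2 j
        exact mul_le_mul h1 h2 (abs_nonneg _) (le_trans (sq_nonneg _) h1)
    _ = (d : ℝ) * (⨆ i : Fin d, s i ^ 2) *
        ⨆ i : Fin d, |H (EuclideanSpace.single i 1) (EuclideanSpace.single i 1)| := by
        rw [Finset.sum_const, Finset.card_univ, Fintype.card_fin, nsmul_eq_mul]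
        ring
end
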